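/- Let h ∈ M_m(ℂ) be positive semidefinite with Tr(h) = 1, and u ∈ M_m(ℂ) a unitary. Then |Tr(u h u*) − Tr(h^{1/2} u h^{1/2} u*)| ≤ ‖h^{1/2}u*‖_HS · ‖u h^{1/2} − h^{1/2} u‖_HS ≤ ‖u h u* − h‖₁^{1/2}. -/

import Mathlib

open Matrix
open scoped ComplexOrder

/-- The square root of a positive semidefinite matrix, as defined in the older Mathlib
(`Matrix.PosSemidef.sqrt`, since removed). -/
noncomputable def Matrix.PosSemidef.sqrt {n : ℕ} {A : Matrix (Fin n) (Fin n) ℂ}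
    (hA : A.PosSemidef) : Matrix (Fin n) (Fin n) ℂ :=
  hA.1.eigenvectorUnitary.1 * diagonal ((↑) ∘ (√·) ∘ hA.1.eigenvalues) *
    (star hA.1.eigenvectorUnitary : Matrix (Fin n) (Fin n) ℂ)

/-- The Hilbert–Schmidt norm `‖x‖_HS = √(Tr(x* x))` of a complex matrix. -/
noncomputable def hsNorm {n : ℕ} (x : Matrix (Fin n) (Fin n) ℂ) : ℝ :=
  Real.sqrt ((xᴴ * x).trace.re)

/-- The trace norm `‖x‖₁ = Tr(|x|) = Tr(√(x* x))` of a complex matrix. -/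
noncomputable def traceNorm {n : ℕ} (x : Matrix (Fin n) (Fin n) ℂ) : ℝ :=
  ((Matrix.posSemidef_conjTranspose_mul_self x).sqrt).trace.re

variable {n : ℕ}

open scoped MatrixOrder in
lemma Matrix.PosSemidef.sqrt_eq_cfc_sqrt {A : Matrix (Fin n) (Fin n) ℂ} (hA : A.PosSemidef) :
    hA.sqrt = CFC.sqrt A := by
  rw [CFC.sqrt_eq_cfc, cfc_nnreal_eq_real _ A hA.nonneg, hA.1.cfc_eq]
  simp only [IsHermitian.cfc, Unitary.conjStarAlgAut_apply, Matrix.PosSemidef.sqrt]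
  congr 3
  funext i
  simp [Real.coe_sqrt, Real.coe_toNNReal', hA.eigenvalues_nonneg i]

open scoped MatrixOrder in
lemma Matrix.PosSemidef.posSemidef_sqrt {A : Matrix (Fin n) (Fin n) ℂ} (hA : A.PosSemidef) :
    hA.sqrt.PosSemidef := by
  rw [hA.sqrt_eq_cfc_sqrt]; exact (CFC.sqrt_nonneg A).posSemidef

open scoped MatrixOrder in
lemma Matrix.PosSemidef.sqrt_mul_self {A : Matrix (Fin n) (Fin n) ℂ} (hA : A.PosSemidef) :
    hA.sqrt * hA.sqrt = A := by
  rw [hA.sqrt_eq_cfc_sqrt]; exact CFC.sqrt_mul_sqrt_self A hA.nonneg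

open scoped MatrixOrder in
lemma Matrix.PosSemidef.eq_sqrt_of_sq_eq {A B : Matrix (Fin n) (Fin n) ℂ} (hB : B.PosSemidef)
    (hA : A.PosSemidef) (h : B ^ 2 = A) : B = hA.sqrt := by
  rw [hA.sqrt_eq_cfc_sqrt]
  exact (CFC.sqrt_unique (by rw [← sq, h]) hB.nonneg).symm

lemma psd_diag_re_nonneg {A : Matrix (Fin n) (Fin n) ℂ} (hA : A.PosSemidef) (i : Fin n) :
    0 ≤ (A i i).re := by
  have h := hA.dotProduct_mulVec_nonneg (Pi.single i 1)
  rw [Complex.nonneg_iff] at h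
  have : dotProduct (star (Pi.single i 1)) (A *ᵥ Pi.single i 1) = A i i := by
    simp [Matrix.mulVec_single, dotProduct, Pi.single_apply, apply_ite]
  rw [this] at h
  exact h.1

lemma hs_trace_eq (x : Matrix (Fin n) (Fin n) ℂ) :
    (xᴴ * x).trace.re = ∑ p : Fin n × Fin n, ‖x p.1 p.2‖ ^ 2 := by
  rw [Matrix.trace, Complex.re_sum, Fintype.sum_prod_type]
  rw [Finset.sum_comm]
  refine Finset.sum_congr rfl fun i _ => ?_
  simp only [Matrix.diag_apply, Matrix.mul_apply, Complex.re_sum, Matrix.conjTranspose_apply]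
  refine Finset.sum_congr rfl fun j _ => ?_
  rw [Complex.star_def, mul_comm, Complex.mul_conj']
  simp [← Complex.ofReal_pow, Complex.sq_norm]

noncomputable def toE (x : Matrix (Fin n) (Fin n) ℂ) : EuclideanSpace ℂ (Fin n × Fin n) :=
  (WithLp.equiv 2 _).symm fun p => x p.1 p.2

lemma hsNorm_eq_norm (x : Matrix (Fin n) (Fin n) ℂ) : hsNorm x = ‖toE x‖ := by
  rw [hsNorm, hs_trace_eq, EuclideanSpace.norm_eq]
  rfl

lemma trace_eq_inner (a b : Matrix (Fin n) (Fin n) ℂ) :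
    (aᴴ * b).trace = inner ℂ (toE a) (toE b) := by
  rw [Matrix.trace, PiLp.inner_apply, Fintype.sum_prod_type, Finset.sum_comm]
  refine Finset.sum_congr rfl fun i _ => ?_
  simp only [Matrix.diag_apply, Matrix.mul_apply, Matrix.conjTranspose_apply]
  refine Finset.sum_congr rfl fun j _ => ?_
  simp [toE, RCLike.inner_apply, Complex.star_def, mul_comm]

lemma hs_cauchy (a b : Matrix (Fin n) (Fin n) ℂ) :
    ‖(aᴴ * b).trace‖ ≤ hsNorm a * hsNorm b := by
  rw [trace_eq_inner, hsNorm_eq_norm, hsNorm_eq_norm]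
  exact norm_inner_le_norm _ _

lemma hsNorm_conjTranspose (a : Matrix (Fin n) (Fin n) ℂ) : hsNorm aᴴ = hsNorm a := by
  rw [hsNorm, hsNorm, conjTranspose_conjTranspose, trace_mul_comm]

lemma hsNorm_sq (x : Matrix (Fin n) (Fin n) ℂ) : hsNorm x ^ 2 = (xᴴ * x).trace.re := by
  rw [hsNorm, Real.sq_sqrt]
  rw [hs_trace_eq]; positivity

lemma hsNorm_mul_unitary (a u : Matrix (Fin n) (Fin n) ℂ) (hu : u * uᴴ = 1) :
    hsNorm (a * u) = hsNorm a := by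
  rw [hsNorm, hsNorm, conjTranspose_mul]
  congr 2
  rw [Matrix.mul_assoc, trace_mul_comm, Matrix.mul_assoc, Matrix.mul_assoc, hu,
    Matrix.mul_one]

lemma conj_mul_conj (U S T : Matrix (Fin n) (Fin n) ℂ) (hU : Uᴴ * U = 1) :
    (U * S * Uᴴ) * (U * T * Uᴴ) = U * (S * T) * Uᴴ := by
  have h : Uᴴ * (U * (T * Uᴴ)) = T * Uᴴ := by rw [← Matrix.mul_assoc, hU, Matrix.one_mul]
  simp only [Matrix.mul_assoc, h]

lemma conj_mul_conj' (U S T : Matrix (Fin n) (Fin n) ℂ) (hU : U * Uᴴ = 1) :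
    (Uᴴ * S * U) * (Uᴴ * T * U) = Uᴴ * (S * T) * U := by
  have h : U * (Uᴴ * (T * U)) = T * U := by rw [← Matrix.mul_assoc, hU, Matrix.one_mul]
  simp only [Matrix.mul_assoc, h]

lemma trace_conj (U S : Matrix (Fin n) (Fin n) ℂ) (hU : U * Uᴴ = 1) :
    (Uᴴ * S * U).trace = S.trace := by
  rw [Matrix.mul_assoc, trace_mul_comm, Matrix.mul_assoc, hU, Matrix.mul_one]

lemma trace_conj' (U S : Matrix (Fin n) (Fin n) ℂ) (hU : Uᴴ * U = 1) :
    (U * S * Uᴴ).trace = S.trace := by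
  rw [Matrix.mul_assoc, trace_mul_comm, Matrix.mul_assoc, hU, Matrix.mul_one]

section PS
variable {X : Matrix (Fin n) (Fin n) ℂ} (hX : X.IsHermitian)

lemma conj_diag_psd (U : Matrix (Fin n) (Fin n) ℂ) (d : Fin n → ℝ) (hd : ∀ i, 0 ≤ d i) :
    (U * diagonal (RCLike.ofReal ∘ d) * Uᴴ).PosSemidef := by
  refine Matrix.PosSemidef.mul_mul_conjTranspose_same ?_ U
  refine Matrix.posSemidef_diagonal_iff.mpr fun i => ?_
  simpa using Complex.zero_le_real.mpr (hd i)

lemma abs_sqrt_eq :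
    (Matrix.posSemidef_conjTranspose_mul_self X).sqrt =
      (hX.eigenvectorUnitary : Matrix (Fin n) (Fin n) ℂ) *
        diagonal (RCLike.ofReal ∘ fun i => |hX.eigenvalues i|) *
        (hX.eigenvectorUnitary : Matrix (Fin n) (Fin n) ℂ)ᴴ := by
  set V := (hX.eigenvectorUnitary : Matrix (Fin n) (Fin n) ℂ) with hVdef
  have hV2 : Vᴴ * V = 1 := by
    rw [← Matrix.star_eq_conjTranspose]
    exact mem_unitaryGroup_iff'.mp hX.eigenvectorUnitary.2
  have hpsd : (V * diagonal (RCLike.ofReal ∘ fun i => |hX.eigenvalues i|) * Vᴴ).PosSemidef :=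
    conj_diag_psd V _ fun i => abs_nonneg _
  refine (Matrix.PosSemidef.eq_sqrt_of_sq_eq hpsd _ ?_).symm
  rw [sq, conj_mul_conj _ _ _ hV2, hX.eq]
  conv_rhs => rw [hX.spectral_theorem, Unitary.conjStarAlgAut_apply, Matrix.star_eq_conjTranspose]
  rw [conj_mul_conj _ _ _ hV2, diagonal_mul_diagonal, diagonal_mul_diagonal]
  congr 2
  funext i
  simp [← Complex.ofReal_mul, abs_mul_abs_self]

lemma traceNorm_hermitian : traceNorm X = ∑ i, |hX.eigenvalues i| := by
  rw [traceNorm, abs_sqrt_eq hX, trace_conj']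
  · rw [Matrix.trace_diagonal, Complex.re_sum]
    simp
  · rw [← Matrix.star_eq_conjTranspose]
    exact mem_unitaryGroup_iff'.mp hX.eigenvectorUnitary.2

end PS

lemma pos_part_decomp {X : Matrix (Fin n) (Fin n) ℂ} (hX : X.IsHermitian) :
    ∃ P Q : Matrix (Fin n) (Fin n) ℂ, P.PosSemidef ∧ Q.PosSemidef ∧ P - Q = X ∧
      P + Q = (Matrix.posSemidef_conjTranspose_mul_self X).sqrt := by
  set V := (hX.eigenvectorUnitary : Matrix (Fin n) (Fin n) ℂ) with hVdef
  refine ⟨V * diagonal (RCLike.ofReal ∘ fun i => max (hX.eigenvalues i) 0) * Vᴴ,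
    V * diagonal (RCLike.ofReal ∘ fun i => max (-hX.eigenvalues i) 0) * Vᴴ,
    conj_diag_psd V _ (fun i => le_max_right _ _),
    conj_diag_psd V _ (fun i => le_max_right _ _), ?_, ?_⟩
  · have hd : diagonal (RCLike.ofReal ∘ fun i => max (hX.eigenvalues i) 0)
        - diagonal (RCLike.ofReal ∘ fun i => max (-hX.eigenvalues i) 0)
        = diagonal (RCLike.ofReal ∘ hX.eigenvalues : Fin n → ℂ) := by
      rw [Matrix.diagonal_sub]
      ext i j
      rcases eq_or_ne i j with rfl | hij
      · simp only [Matrix.diagonal_apply_eq, Function.comp_apply, Pi.sub_apply]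
        rw [← RCLike.ofReal_sub, max_zero_sub_max_neg_zero_eq_self]
      · simp [Matrix.diagonal_apply_ne _ hij]
    rw [← Matrix.sub_mul, ← Matrix.mul_sub, hd]
    conv_rhs => rw [hX.spectral_theorem, Unitary.conjStarAlgAut_apply, Matrix.star_eq_conjTranspose]
  · have hd : diagonal (RCLike.ofReal ∘ fun i => max (hX.eigenvalues i) 0)
        + diagonal (RCLike.ofReal ∘ fun i => max (-hX.eigenvalues i) 0)
        = diagonal (RCLike.ofReal ∘ fun i => |hX.eigenvalues i| : Fin n → ℂ) := by
      rw [Matrix.diagonal_add]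
      ext i j
      rcases eq_or_ne i j with rfl | hij
      · simp only [Matrix.diagonal_apply_eq, Function.comp_apply, Pi.add_apply]
        rw [← RCLike.ofReal_add, max_zero_add_max_neg_zero_eq_abs_self]
      · simp [Matrix.diagonal_apply_ne _ hij]
    rw [← Matrix.add_mul, ← Matrix.mul_add, hd, abs_sqrt_eq hX]

lemma diag_dominance {X : Matrix (Fin n) (Fin n) ℂ} (hX : X.IsHermitian)
    (W : Matrix (Fin n) (Fin n) ℂ) (i : Fin n) :
    |((Wᴴ * X * W) i i).re| ≤
      ((Wᴴ * (Matrix.posSemidef_conjTranspose_mul_self X).sqrt * W) i i).re := by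
  obtain ⟨P, Q, hP, hQ, h1, h2⟩ := pos_part_decomp hX
  have hp := psd_diag_re_nonneg (hP.conjTranspose_mul_mul_same W) i
  have hq := psd_diag_re_nonneg (hQ.conjTranspose_mul_mul_same W) i
  have hXeq : Wᴴ * X * W = Wᴴ * P * W - Wᴴ * Q * W := by
    rw [← h1, Matrix.mul_sub, Matrix.sub_mul]
  have hAeq : Wᴴ * (Matrix.posSemidef_conjTranspose_mul_self X).sqrt * W
      = Wᴴ * P * W + Wᴴ * Q * W := by
    rw [← h2, Matrix.mul_add, Matrix.add_mul]
  rw [hXeq, hAeq]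
  simp only [Matrix.sub_apply, Matrix.add_apply, Complex.sub_re, Complex.add_re]
  rw [abs_le]
  constructor <;> linarith

lemma rclike_ofReal_eq (r : ℝ) : (RCLike.ofReal r : ℂ) = Complex.ofReal r := rfl

lemma powers_stormer {A B : Matrix (Fin n) (Fin n) ℂ} (hA : A.PosSemidef) (hB : B.PosSemidef) :
    ((hA.sqrt - hB.sqrt)ᴴ * (hA.sqrt - hB.sqrt)).trace.re ≤ traceNorm (A - B) := by
  have hsa := hA.posSemidef_sqrt
  have hsb := hB.posSemidef_sqrt
  have hC : (hA.sqrt - hB.sqrt).IsHermitian := hsa.1.sub hsb.1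
  have hX : (A - B).IsHermitian := hA.1.sub hB.1
  set W := (hC.eigenvectorUnitary : Matrix (Fin n) (Fin n) ℂ) with hWdef
  have hW1 : W * Wᴴ = 1 := by
    rw [← Matrix.star_eq_conjTranspose]
    exact mem_unitaryGroup_iff.mp hC.eigenvectorUnitary.2
  have hW2 : Wᴴ * W = 1 := by
    rw [← Matrix.star_eq_conjTranspose]
    exact mem_unitaryGroup_iff'.mp hC.eigenvectorUnitary.2
  have hCW : Wᴴ * (hA.sqrt - hB.sqrt) * W = diagonal (RCLike.ofReal ∘ hC.eigenvalues) := by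
    rw [← Matrix.star_eq_conjTranspose]
    have := hC.conjStarAlgAut_star_eigenvectorUnitary
    rw [Unitary.conjStarAlgAut_apply] at this
    simpa [Unitary.coe_star] using this
  -- LHS = sum of squared eigenvalues of C
  have hLHS : ((hA.sqrt - hB.sqrt)ᴴ * (hA.sqrt - hB.sqrt)).trace.re
      = ∑ i, hC.eigenvalues i ^ 2 := by
    rw [hC.eq]
    have hCC : (hA.sqrt - hB.sqrt) * (hA.sqrt - hB.sqrt)
        = W * (diagonal (RCLike.ofReal ∘ hC.eigenvalues)
            * diagonal (RCLike.ofReal ∘ hC.eigenvalues)) * Wᴴ := by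
      conv_lhs => rw [hC.spectral_theorem, Unitary.conjStarAlgAut_apply, Matrix.star_eq_conjTranspose, ← hWdef]
      rw [conj_mul_conj _ _ _ hW2]
    rw [hCC, trace_conj' _ _ hW2, diagonal_mul_diagonal, Matrix.trace_diagonal, Complex.re_sum]
    refine Finset.sum_congr rfl fun i _ => ?_
    simp [← RCLike.ofReal_mul, sq]
  -- the G matrix
  have hGm : Wᴴ * (hA.sqrt + hB.sqrt) * W - diagonal (RCLike.ofReal ∘ hC.eigenvalues)
      = Wᴴ * (hB.sqrt + hB.sqrt) * W := by
    rw [← hCW, ← Matrix.sub_mul, ← Matrix.mul_sub]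
    congr 2
    abel
  have hGp : Wᴴ * (hA.sqrt + hB.sqrt) * W + diagonal (RCLike.ofReal ∘ hC.eigenvalues)
      = Wᴴ * (hA.sqrt + hA.sqrt) * W := by
    rw [← hCW, ← Matrix.add_mul, ← Matrix.mul_add]
    congr 2
    abel
  have f2 : ∀ i, |hC.eigenvalues i| ≤ ((Wᴴ * (hA.sqrt + hB.sqrt) * W) i i).re := by
    intro i
    have h1 := psd_diag_re_nonneg ((hsb.add hsb).conjTranspose_mul_mul_same W) i
    have h2 := psd_diag_re_nonneg ((hsa.add hsa).conjTranspose_mul_mul_same W) i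
    rw [← hGm] at h1
    rw [← hGp] at h2
    simp only [Matrix.sub_apply, Matrix.add_apply, Complex.sub_re, Complex.add_re,
      Matrix.diagonal_apply_eq, Function.comp_apply, rclike_ofReal_eq, Complex.ofReal_re] at h1 h2
    rw [abs_le]
    constructor <;> linarith
  -- key algebraic identity
  have key : (hA.sqrt - hB.sqrt) * (hA.sqrt + hB.sqrt)
      + (hA.sqrt + hB.sqrt) * (hA.sqrt - hB.sqrt) = (A - B) + (A - B) := by
    have e : (hA.sqrt - hB.sqrt) * (hA.sqrt + hB.sqrt)
        + (hA.sqrt + hB.sqrt) * (hA.sqrt - hB.sqrt)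
        = (hA.sqrt * hA.sqrt - hB.sqrt * hB.sqrt) + (hA.sqrt * hA.sqrt - hB.sqrt * hB.sqrt) := by
      noncomm_ring
    rw [e, hA.sqrt_mul_self, hB.sqrt_mul_self]
  -- diagonal entries of M
  have hMG : ∀ i, ((Wᴴ * (A - B) * W) i i).re
      = hC.eigenvalues i * ((Wᴴ * (hA.sqrt + hB.sqrt) * W) i i).re := by
    intro i
    have hmm : Wᴴ * (A - B) * W + Wᴴ * (A - B) * W
        = diagonal (RCLike.ofReal ∘ hC.eigenvalues) * (Wᴴ * (hA.sqrt + hB.sqrt) * W)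
          + (Wᴴ * (hA.sqrt + hB.sqrt) * W) * diagonal (RCLike.ofReal ∘ hC.eigenvalues) := by
      rw [← hCW, conj_mul_conj' _ _ _ hW1, conj_mul_conj' _ _ _ hW1, ← Matrix.add_mul,
        ← Matrix.mul_add, ← key, Matrix.mul_add, Matrix.add_mul]
    have h := congrArg (fun Y : Matrix (Fin n) (Fin n) ℂ => (Y i i).re) hmm
    simp only [Matrix.add_apply, Complex.add_re, Matrix.diagonal_mul, Matrix.mul_diagonal,
      Function.comp_apply] at h
    have hre : ((RCLike.ofReal (hC.eigenvalues i) : ℂ) * (Wᴴ * (hA.sqrt + hB.sqrt) * W) i i).re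
        = hC.eigenvalues i * ((Wᴴ * (hA.sqrt + hB.sqrt) * W) i i).re := by
      simp [rclike_ofReal_eq, Complex.mul_re]
    rw [hre, mul_comm ((Wᴴ * (hA.sqrt + hB.sqrt) * W) i i), hre] at h
    linarith
  -- final chain
  have hsum : ∑ i, hC.eigenvalues i ^ 2
      ≤ ∑ i, ((Wᴴ * (Matrix.posSemidef_conjTranspose_mul_self (A - B)).sqrt * W) i i).re := by
    refine Finset.sum_le_sum fun i _ => ?_
    have h2 := f2 i
    have hGnn : 0 ≤ ((Wᴴ * (hA.sqrt + hB.sqrt) * W) i i).re := le_trans (abs_nonneg _) h2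
    calc hC.eigenvalues i ^ 2 = |hC.eigenvalues i| * |hC.eigenvalues i| := by
          rw [← abs_mul, abs_mul_self, sq]
      _ ≤ |hC.eigenvalues i| * ((Wᴴ * (hA.sqrt + hB.sqrt) * W) i i).re :=
          mul_le_mul_of_nonneg_left h2 (abs_nonneg _)
      _ = |((Wᴴ * (A - B) * W) i i).re| := by
          rw [hMG i, abs_mul, abs_of_nonneg hGnn]
      _ ≤ _ := diag_dominance hX W i
  have hRHS : ∑ i, ((Wᴴ * (Matrix.posSemidef_conjTranspose_mul_self (A - B)).sqrt * W) i i).re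
      = traceNorm (A - B) := by
    have ht : (Wᴴ * (Matrix.posSemidef_conjTranspose_mul_self (A - B)).sqrt * W).trace
        = ((Matrix.posSemidef_conjTranspose_mul_self (A - B)).sqrt).trace :=
      trace_conj _ _ hW1
    rw [traceNorm, ← ht, Matrix.trace, Complex.re_sum]
    rfl
  rw [hLHS]
  rw [← hRHS]
  exact hsum

/-- For positive semidefinite `h` with `Tr(h) = 1` and a unitary `u`:
`|Tr(uhu*) − Tr(h^{1/2}uh^{1/2}u*)| ≤ ‖h^{1/2}u*‖_HS · ‖uh^{1/2} − h^{1/2}u‖_HS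
  ≤ ‖uhu* − h‖₁^{1/2}`. -/
theorem trace_difference_estimate {m : ℕ} (h u : Matrix (Fin m) (Fin m) ℂ)
    (hh : h.PosSemidef) (htr : h.trace = 1)
    (hu : u ∈ unitary (Matrix (Fin m) (Fin m) ℂ)) :
    ‖(u * h * star u).trace - (hh.sqrt * u * hh.sqrt * star u).trace‖
        ≤ hsNorm (hh.sqrt * star u) * hsNorm (u * hh.sqrt - hh.sqrt * u) ∧
    hsNorm (hh.sqrt * star u) * hsNorm (u * hh.sqrt - hh.sqrt * u)
        ≤ Real.sqrt (traceNorm (u * h * star u - h)) := by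
  have hu1 : uᴴ * u = 1 := by
    rw [← Matrix.star_eq_conjTranspose]; exact (Unitary.mem_iff.mp hu).1
  have hu2 : u * uᴴ = 1 := by
    rw [← Matrix.star_eq_conjTranspose]; exact (Unitary.mem_iff.mp hu).2
  simp only [Matrix.star_eq_conjTranspose]
  set s := hh.sqrt with hs
  have hss : s * s = h := hh.sqrt_mul_self
  have hsH : sᴴ = s := hh.posSemidef_sqrt.1
  have e1 : (u * s) * (s * uᴴ) = u * h * uᴴ := by
    rw [Matrix.mul_assoc u s, ← Matrix.mul_assoc s s, hss, ← Matrix.mul_assoc]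
  constructor
  · have hid : (u * h * uᴴ).trace - (s * u * s * uᴴ).trace
        = (((u * s - s * u)ᴴ)ᴴ * (s * uᴴ)).trace := by
      rw [conjTranspose_conjTranspose, Matrix.sub_mul, Matrix.trace_sub, e1,
        Matrix.mul_assoc (s * u)]
    calc ‖(u * h * uᴴ).trace - (s * u * s * uᴴ).trace‖
        = ‖(((u * s - s * u)ᴴ)ᴴ * (s * uᴴ)).trace‖ := by rw [hid]
      _ ≤ hsNorm ((u * s - s * u)ᴴ) * hsNorm (s * uᴴ) := hs_cauchy _ _
      _ = hsNorm (s * uᴴ) * hsNorm (u * s - s * u) := by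
          rw [hsNorm_conjTranspose, mul_comm]
  · have h1 : hsNorm (s * uᴴ) = 1 := by
      rw [hsNorm, conjTranspose_mul, conjTranspose_conjTranspose, hsH, e1,
        trace_conj' _ _ hu1, htr]
      simp
    rw [h1, one_mul]
    have hApsd : (u * h * uᴴ).PosSemidef := hh.mul_mul_conjTranspose_same u
    have hsqrtA : hApsd.sqrt = u * s * uᴴ := by
      refine (Matrix.PosSemidef.eq_sqrt_of_sq_eq
        (hh.posSemidef_sqrt.mul_mul_conjTranspose_same u) hApsd ?_).symm
      rw [sq, conj_mul_conj _ _ _ hu1, hss]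
    have h2 : hsNorm (u * s - s * u) = hsNorm (u * s * uᴴ - s) := by
      have e : (u * s * uᴴ - s) * u = u * s - s * u := by
        rw [Matrix.sub_mul, Matrix.mul_assoc (u * s), hu1, Matrix.mul_one]
      rw [← e, hsNorm_mul_unitary _ _ hu2]
    rw [h2]
    have hps := powers_stormer hApsd hh
    rw [hsqrtA, ← hs] at hps
    calc hsNorm (u * s * uᴴ - s)
        = Real.sqrt (((u * s * uᴴ - s)ᴴ * (u * s * uᴴ - s)).trace.re) := rfl
      _ ≤ Real.sqrt (traceNorm (u * h * uᴴ - h)) := Real.sqrt_le_sqrt hps
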